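/- Let A be the diagonal matrix with distinct eigenvalues λ₁, …, λ_m of multiplicities σ₁, …, σ_m as in the block structure, let D = (d_{ij}) be a real symmetric N×N matrix, and assume the Kalman rank condition rank(D, AD, …, A^{N−1}D) = N holds. Then there exists a constant c > 0 with the following property: for every complex Hilbert space H and all vectors u^(1), …, u^(N) ∈ H satisfying ⟨u^(i), u^(j)⟩_H = 0 whenever i belongs to block k and j belongs to block l with k ≠ l, one has Σ_{i=1}^N ‖u^(i)‖²_H ≤ c · Σ_{i=1}^N ‖Σ_{j=1}^N d_{ij} u^(j)‖²_H. -/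

import Mathlib

/-- The Kalman matrix `(D, AD, A²D, …, A^{M−1}D)` of a pair of square matrices,
viewed as a matrix indexed by `n × (Fin M × n)` whose `(i, (k, j))` entry is
`(A^k * D) i j`. -/
def kalmanMatrix {n : Type*} [Fintype n] [DecidableEq n] (M : ℕ)
    (A D : Matrix n n ℝ) : Matrix n (Fin M × n) ℝ :=
  fun i p => (A ^ (p.1 : ℕ) * D) i p.2

/-- `blockStart σ l = μ_{l-1} = σ₁ + ⋯ + σ_{l-1}`, the index at which block `l` begins
(0-based); block `l` consists of the indices `i` with `blockStart σ l ≤ i < blockStart σ l + σ l`. -/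
def blockStart {m : ℕ} (σ : Fin m → ℕ) (l : Fin m) : ℕ :=
  ∑ k ∈ Finset.Iio l, σ k

open Matrix

section Aux

lemma blockStart_add_le {m : ℕ} (σ : Fin m → ℕ) {k l : Fin m} (h : k < l) :
    blockStart σ k + σ k ≤ blockStart σ l := by
  have hsub : insert k (Finset.Iio k) ⊆ Finset.Iio l := by
    intro x hx
    simp only [Finset.mem_insert, Finset.mem_Iio] at *
    rcases hx with rfl | hx
    · exact h
    · exact hx.trans h
  calc blockStart σ k + σ k = ∑ x ∈ insert k (Finset.Iio k), σ x := by
        rw [Finset.sum_insert (by simp), blockStart]; ring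
    _ ≤ _ := Finset.sum_le_sum_of_subset hsub

lemma block_unique {m : ℕ} (σ : Fin m → ℕ) {k l : Fin m} {i : ℕ}
    (hk1 : blockStart σ k ≤ i) (hk2 : i < blockStart σ k + σ k)
    (hl1 : blockStart σ l ≤ i) (hl2 : i < blockStart σ l + σ l) : k = l := by
  rcases lt_trichotomy k l with h | h | h
  · have := blockStart_add_le σ h; omega
  · exact h
  · have := blockStart_add_le σ h; omega

lemma block_exists {m N : ℕ} (σ : Fin m → ℕ) (hsum : ∑ l, σ l = N) {i : ℕ} (hi : i < N) :
    ∃ l, blockStart σ l ≤ i ∧ i < blockStart σ l + σ l := by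
  have hm : 0 < m := by
    rcases Nat.eq_zero_or_pos m with rfl | h
    · simp at hsum; omega
    · exact h
  set s := Finset.univ.filter (fun l : Fin m => blockStart σ l ≤ i) with hs
  have h0 : (⟨0, hm⟩ : Fin m) ∈ s := by
    have : blockStart σ ⟨0, hm⟩ = 0 := by
      rw [blockStart]
      apply Finset.sum_eq_zero_iff.mpr
      intro x hx
      simp only [Finset.mem_Iio, Fin.lt_def] at hx
      omega
    simp [hs, this]
  have hne : s.Nonempty := ⟨_, h0⟩
  set l := s.max' hne with hldef
  have hl : blockStart σ l ≤ i := by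
    have := s.max'_mem hne
    simpa [hs] using this
  refine ⟨l, hl, ?_⟩
  by_contra hcon
  push_neg at hcon
  rcases lt_or_eq_of_le (Nat.succ_le_of_lt l.isLt) with hlt | heq
  · have hbs : blockStart σ ⟨(l : ℕ) + 1, hlt⟩ = blockStart σ l + σ l := by
      have h1 : (Finset.Iio (⟨(l : ℕ) + 1, hlt⟩ : Fin m)) = insert l (Finset.Iio l) := by
        ext x
        simp only [Finset.mem_Iio, Finset.mem_insert, Fin.lt_def, Fin.ext_iff]
        omega
      rw [blockStart, blockStart, h1, Finset.sum_insert (by simp)]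
      ring
    have hmem : (⟨(l : ℕ) + 1, hlt⟩ : Fin m) ∈ s := by
      simp only [hs, Finset.mem_filter, Finset.mem_univ, true_and, hbs]
      omega
    have := s.le_max' _ hmem
    rw [← hldef] at this
    simp only [Fin.le_def] at this
    omega
  · have : ∑ x, σ x = blockStart σ l + σ l := by
      have h1 : (Finset.univ : Finset (Fin m)) = insert l (Finset.Iio l) := by
        ext x
        simp only [Finset.mem_univ, Finset.mem_insert, Finset.mem_Iio, Fin.lt_def, Fin.ext_iff,
          true_iff]
        omega
      rw [blockStart, h1, Finset.sum_insert (by simp)]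
      ring
    omega

lemma vecMul_kalman_injective {N : ℕ} (A D : Matrix (Fin N) (Fin N) ℝ)
    (hK : (kalmanMatrix N A D).rank = N) (y : Fin N → ℝ)
    (hy : y ᵥ* kalmanMatrix N A D = 0) : y = 0 := by
  have hrT : ((kalmanMatrix N A D)ᵀ).rank = N := by
    rw [Matrix.rank_transpose]; exact hK
  rw [Matrix.rank] at hrT
  have h1 := LinearMap.finrank_range_add_finrank_ker ((kalmanMatrix N A D)ᵀ.mulVecLin)
  rw [hrT] at h1
  have h2 : Module.finrank ℝ (Fin N → ℝ) = N := by simp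
  rw [h2] at h1
  have hker : LinearMap.ker ((kalmanMatrix N A D)ᵀ.mulVecLin) = ⊥ :=
    Submodule.finrank_eq_zero.mp (by omega)
  have hmem : y ∈ LinearMap.ker ((kalmanMatrix N A D)ᵀ.mulVecLin) := by
    rw [LinearMap.mem_ker, Matrix.mulVecLin_apply, Matrix.mulVec_transpose, hy]
  rw [hker] at hmem
  simpa using hmem

lemma col_indep {N m : ℕ} (lam : Fin m → ℝ) (σ : Fin m → ℕ)
    (A D : Matrix (Fin N) (Fin N) ℝ)
    (hAoff : ∀ i j : Fin N, i ≠ j → A i j = 0)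
    (hAdiag : ∀ (l : Fin m) (i : Fin N),
      blockStart σ l ≤ (i : ℕ) → (i : ℕ) < blockStart σ l + σ l → A i i = lam l)
    (hKinj : ∀ y : Fin N → ℝ, y ᵥ* kalmanMatrix N A D = 0 → y = 0)
    (l : Fin m) (x : Fin N → ℝ)
    (hsupp : ∀ j : Fin N, x j ≠ 0 →
      blockStart σ l ≤ (j : ℕ) ∧ (j : ℕ) < blockStart σ l + σ l)
    (hxD : x ᵥ* D = 0) : x = 0 := by
  apply hKinj
  funext p
  obtain ⟨k, j⟩ := p
  have hAdiagonal : A = Matrix.diagonal (fun i => A i i) := by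
    ext i j'
    by_cases h : i = j'
    · subst h; simp
    · rw [Matrix.diagonal_apply_ne _ h]; exact hAoff _ _ h
  have hpow : ∀ i : Fin N, (A ^ (k : ℕ) * D) i j = (A i i) ^ (k : ℕ) * D i j := by
    intro i
    conv_lhs => rw [hAdiagonal, Matrix.diagonal_pow, Matrix.diagonal_mul]
    simp
  have h0 : ∀ j' : Fin N, (x ᵥ* D) j' = 0 := fun j' => by rw [hxD]; rfl
  show (x ᵥ* kalmanMatrix N A D) (k, j) = 0
  calc (x ᵥ* kalmanMatrix N A D) (k, j)
      = ∑ i, x i * ((A ^ (k : ℕ) * D) i j) := by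
        simp [Matrix.vecMul, dotProduct, kalmanMatrix]
    _ = ∑ i, (lam l) ^ (k : ℕ) * (x i * D i j) := by
        apply Finset.sum_congr rfl
        intro i _
        rw [hpow]
        by_cases hxi : x i = 0
        · rw [hxi]; ring
        · obtain ⟨h1, h2⟩ := hsupp i hxi
          rw [hAdiag l i h1 h2]; ring
    _ = (lam l) ^ (k : ℕ) * ∑ i, x i * D i j := by rw [Finset.mul_sum]
    _ = 0 := by
        have := h0 j
        simp [Matrix.vecMul, dotProduct] at this
        rw [this, mul_zero]

lemma dot_expand {N : ℕ} (B : Matrix (Fin N) (Fin N) ℝ) (v : Fin N → ℝ) :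
    ∑ i, (∑ j, B i j * v j) * (∑ j', B i j' * v j') =
      ∑ j, ∑ j', v j * (Bᵀ * B) j j' * v j' := by
  simp_rw [Matrix.mul_apply, Matrix.transpose_apply, Finset.sum_mul, Finset.mul_sum]
  rw [Finset.sum_comm]
  apply Finset.sum_congr rfl; intro j _
  rw [Finset.sum_comm]
  apply Finset.sum_congr rfl; intro j' _
  rw [Finset.sum_mul]
  apply Finset.sum_congr rfl; intro i _
  ring

lemma posdef_M {N m : ℕ} (σ : Fin m → ℕ) (hsum : ∑ l, σ l = N)
    (D : Matrix (Fin N) (Fin N) ℝ) (hD : D.IsSymm)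
    (hcol : ∀ (l : Fin m) (x : Fin N → ℝ),
      (∀ j : Fin N, x j ≠ 0 → blockStart σ l ≤ (j : ℕ) ∧ (j : ℕ) < blockStart σ l + σ l) →
      x ᵥ* D = 0 → x = 0) :
    Matrix.PosDef (Matrix.of (fun j j' : Fin N =>
      if ∃ l : Fin m, (blockStart σ l ≤ (j : ℕ) ∧ (j : ℕ) < blockStart σ l + σ l) ∧
        (blockStart σ l ≤ (j' : ℕ) ∧ (j' : ℕ) < blockStart σ l + σ l)
      then (D * D) j j' else 0)) := by
  classical
  set M : Matrix (Fin N) (Fin N) ℝ := Matrix.of (fun j j' : Fin N =>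
      if ∃ l : Fin m, (blockStart σ l ≤ (j : ℕ) ∧ (j : ℕ) < blockStart σ l + σ l) ∧
        (blockStart σ l ≤ (j' : ℕ) ∧ (j' : ℕ) < blockStart σ l + σ l)
      then (D * D) j j' else 0) with hM
  have hDD : ∀ j j' : Fin N, (D * D) j' j = (D * D) j j' := by
    intro j j'
    rw [Matrix.mul_apply, Matrix.mul_apply]
    apply Finset.sum_congr rfl
    intro k _
    rw [hD.apply j' k, hD.apply k j, mul_comm]
  rw [Matrix.posDef_iff_dotProduct_mulVec]
  constructor
  · show Mᴴ = M
    ext j j'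
    simp only [Matrix.conjTranspose_apply, star_trivial, hM, Matrix.of_apply]
    by_cases h : ∃ l : Fin m, (blockStart σ l ≤ (j : ℕ) ∧ (j : ℕ) < blockStart σ l + σ l) ∧
        (blockStart σ l ≤ (j' : ℕ) ∧ (j' : ℕ) < blockStart σ l + σ l)
    · obtain ⟨l, hl1, hl2⟩ := h
      rw [if_pos ⟨l, hl2, hl1⟩, if_pos ⟨l, hl1, hl2⟩, hDD]
    · rw [if_neg h, if_neg (fun ⟨l, hl1, hl2⟩ => h ⟨l, hl2, hl1⟩)]
  · intro x hx
    set xb : Fin m → Fin N → ℝ := fun l j =>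
      if blockStart σ l ≤ (j : ℕ) ∧ (j : ℕ) < blockStart σ l + σ l then x j else 0 with hxb
    have hsupp : ∀ l (j : Fin N), xb l j ≠ 0 →
        blockStart σ l ≤ (j : ℕ) ∧ (j : ℕ) < blockStart σ l + σ l := by
      intro l j h
      by_contra hc
      exact h (by simp [hxb, if_neg hc])
    have hterm : ∀ l : Fin m, (D *ᵥ xb l) ⬝ᵥ (D *ᵥ xb l) =
        ∑ j, ∑ j', xb l j * (D * D) j j' * xb l j' := by
      intro l
      have := dot_expand D (xb l)
      rw [hD.eq] at this
      simpa only [dotProduct, Matrix.mulVec] using this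
    have key : star x ⬝ᵥ M *ᵥ x = ∑ l : Fin m, (D *ᵥ xb l) ⬝ᵥ (D *ᵥ xb l) := by
      have lhs : star x ⬝ᵥ M *ᵥ x = ∑ j, ∑ j', x j * M j j' * x j' := by
        simp only [dotProduct, Matrix.mulVec, star_trivial, Finset.mul_sum]
        apply Finset.sum_congr rfl; intro j _
        apply Finset.sum_congr rfl; intro j' _
        ring
      rw [lhs]
      simp_rw [hterm]
      symm
      rw [Finset.sum_comm]
      apply Finset.sum_congr rfl; intro j _
      rw [Finset.sum_comm]
      apply Finset.sum_congr rfl; intro j' _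
      by_cases h : ∃ l : Fin m, (blockStart σ l ≤ (j : ℕ) ∧ (j : ℕ) < blockStart σ l + σ l) ∧
          (blockStart σ l ≤ (j' : ℕ) ∧ (j' : ℕ) < blockStart σ l + σ l)
      · obtain ⟨l₀, hl₀⟩ := h
        have hMval : M j j' = (D * D) j j' := by
          simp only [hM, Matrix.of_apply]
          exact if_pos ⟨l₀, hl₀⟩
        rw [hMval, Finset.sum_eq_single l₀]
        · have e1 : xb l₀ j = x j := by simp only [hxb]; exact if_pos hl₀.1
          have e2 : xb l₀ j' = x j' := by simp only [hxb]; exact if_pos hl₀.2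
          rw [e1, e2]
        · intro l _ hne
          by_cases h1 : xb l j = 0
          · rw [h1]; ring
          · exact absurd (block_unique σ (hsupp l j h1).1 (hsupp l j h1).2 hl₀.1.1 hl₀.1.2) hne
        · intro habs
          exact absurd (Finset.mem_univ l₀) habs
      · have hMval : M j j' = 0 := by
          simp only [hM, Matrix.of_apply]
          exact if_neg h
        rw [hMval, mul_zero, zero_mul]
        apply Finset.sum_eq_zero
        · intro l _
          by_cases h1 : xb l j = 0
          · rw [h1]; ring
          · by_cases h2 : xb l j' = 0
            · rw [h2]; ring
            · exact absurd ⟨l, hsupp l j h1, hsupp l j' h2⟩ h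
    rw [key]
    obtain ⟨j₀, hj₀'⟩ := Function.ne_iff.mp hx
    have hj₀ : x j₀ ≠ 0 := by simpa using hj₀'
    obtain ⟨l₀, hb1, hb2⟩ := block_exists σ hsum j₀.isLt
    have hxbne : xb l₀ ≠ 0 := by
      intro hzero
      have h1 : xb l₀ j₀ = x j₀ := by simp only [hxb]; exact if_pos ⟨hb1, hb2⟩
      rw [hzero] at h1
      exact hj₀ h1.symm
    have hvne : D *ᵥ xb l₀ ≠ 0 := by
      intro hzero
      apply hxbne
      apply hcol l₀ (xb l₀) (hsupp l₀)
      rw [← hD.eq, Matrix.mulVec_transpose] at hzero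
      exact hzero
    apply Finset.sum_pos'
    · intro l _
      exact Finset.sum_nonneg fun i _ => mul_self_nonneg _
    · refine ⟨l₀, Finset.mem_univ _, ?_⟩
      rcases eq_or_lt_of_le (Finset.sum_nonneg fun i (_ : i ∈ Finset.univ) =>
        mul_self_nonneg ((D *ᵥ xb l₀) i)) with heq | hlt
      · exact absurd (dotProduct_self_eq_zero.mp heq.symm) hvne
      · exact hlt

open scoped MatrixOrder in
lemma exists_factor {N : ℕ} (M : Matrix (Fin N) (Fin N) ℝ) (hM : M.PosDef) :
    ∃ S T : Matrix (Fin N) (Fin N) ℝ, Sᵀ * S = M ∧ T * S = 1 := by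
  have hps : M.PosSemidef := hM.posSemidef
  set S := CFC.sqrt M with hS
  have hH : S.IsHermitian := (CFC.sqrt_nonneg M).posSemidef.1
  have hT : Sᵀ = S := by
    ext i j
    have h := congrFun (congrFun hH i) j
    rw [Matrix.conjTranspose_apply, star_trivial] at h
    rw [Matrix.transpose_apply, ← h]
  have hSS : Sᵀ * S = M := by rw [hT, CFC.sqrt_mul_sqrt_self M hps.nonneg]
  have hdet : IsUnit S.det := by
    have hMdet : 0 < M.det := hM.det_pos
    rw [← hSS, Matrix.det_mul, hT] at hMdet
    exact isUnit_iff_ne_zero.mpr (fun h => by rw [h, mul_zero] at hMdet; exact lt_irrefl _ hMdet)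
  exact ⟨S, S⁻¹, hSS, Matrix.nonsing_inv_mul S hdet⟩

lemma sum_inner_expand {N : ℕ} {H : Type} [NormedAddCommGroup H] [InnerProductSpace ℂ H]
    (B : Matrix (Fin N) (Fin N) ℝ) (u : Fin N → H) :
    ∑ k, (inner ℂ (∑ j, ((B k j : ℝ) : ℂ) • u j) (∑ j, ((B k j : ℝ) : ℂ) • u j) : ℂ)
      = ∑ j, ∑ j', (((Bᵀ * B) j j' : ℝ) : ℂ) * inner ℂ (u j) (u j') := by
  simp_rw [sum_inner, inner_sum, inner_smul_left, inner_smul_right, Complex.conj_ofReal,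
    Matrix.mul_apply, Matrix.transpose_apply, Complex.ofReal_sum, Finset.sum_mul,
    Complex.ofReal_mul]
  rw [Finset.sum_comm]
  apply Finset.sum_congr rfl; intro j _
  rw [Finset.sum_comm]
  apply Finset.sum_congr rfl; intro j' _
  apply Finset.sum_congr rfl; intro k _
  ring

end Aux

theorem stmt6 (N m : ℕ) (lam : Fin m → ℝ) (σ : Fin m → ℕ)
    (hlam : Function.Injective lam) (hσ : ∀ l, 0 < σ l)
    (hsum : ∑ l, σ l = N)
    (A D : Matrix (Fin N) (Fin N) ℝ) (hD : D.IsSymm)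
    (hAoff : ∀ i j : Fin N, i ≠ j → A i j = 0)
    (hAdiag : ∀ (l : Fin m) (i : Fin N),
      blockStart σ l ≤ (i : ℕ) → (i : ℕ) < blockStart σ l + σ l → A i i = lam l)
    (hK : (kalmanMatrix N A D).rank = N) :
    ∃ c : ℝ, 0 < c ∧
      ∀ (H : Type) [NormedAddCommGroup H] [InnerProductSpace ℂ H] (u : Fin N → H),
        (∀ k l : Fin m, k ≠ l → ∀ i j : Fin N,
          blockStart σ k ≤ (i : ℕ) → (i : ℕ) < blockStart σ k + σ k →
          blockStart σ l ≤ (j : ℕ) → (j : ℕ) < blockStart σ l + σ l →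
          (inner ℂ (u i) (u j) : ℂ) = 0) →
        ∑ i, ‖u i‖ ^ 2 ≤ c * ∑ i, ‖∑ j, (D i j : ℂ) • u j‖ ^ 2 := by
  have hKinj : ∀ y : Fin N → ℝ, y ᵥ* kalmanMatrix N A D = 0 → y = 0 :=
    vecMul_kalman_injective A D hK
  have hcol : ∀ (l : Fin m) (x : Fin N → ℝ),
      (∀ j : Fin N, x j ≠ 0 → blockStart σ l ≤ (j : ℕ) ∧ (j : ℕ) < blockStart σ l + σ l) →
      x ᵥ* D = 0 → x = 0 := fun l x h1 h2 => col_indep lam σ A D hAoff hAdiag hKinj l x h1 h2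
  set M : Matrix (Fin N) (Fin N) ℝ := Matrix.of (fun j j' : Fin N =>
      if ∃ l : Fin m, (blockStart σ l ≤ (j : ℕ) ∧ (j : ℕ) < blockStart σ l + σ l) ∧
        (blockStart σ l ≤ (j' : ℕ) ∧ (j' : ℕ) < blockStart σ l + σ l)
      then (D * D) j j' else 0) with hMdef
  have hMpd : M.PosDef := posdef_M σ hsum D hD hcol
  obtain ⟨S, T, hSS, hTS⟩ := exists_factor M hMpd
  refine ⟨(∑ j, ∑ k, (T j k) ^ 2) + 1, by positivity, ?_⟩
  intro H _ _ u horth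
  set w : Fin N → H := fun k => ∑ j, ((S k j : ℝ) : ℂ) • u j with hw
  -- energies agree
  have hMD : ∑ j, ∑ j', ((M j j' : ℝ) : ℂ) * (inner ℂ (u j) (u j') : ℂ)
      = ∑ j, ∑ j', (((D * D) j j' : ℝ) : ℂ) * (inner ℂ (u j) (u j') : ℂ) := by
    apply Finset.sum_congr rfl; intro j _
    apply Finset.sum_congr rfl; intro j' _
    by_cases h : ∃ l : Fin m, (blockStart σ l ≤ (j : ℕ) ∧ (j : ℕ) < blockStart σ l + σ l) ∧
        (blockStart σ l ≤ (j' : ℕ) ∧ (j' : ℕ) < blockStart σ l + σ l)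
    · have : M j j' = (D * D) j j' := by
        simp only [hMdef, Matrix.of_apply]
        exact if_pos h
      rw [this]
    · obtain ⟨k₀, hk1, hk2⟩ := block_exists σ hsum j.isLt
      obtain ⟨l₀, hl1, hl2⟩ := block_exists σ hsum j'.isLt
      have hne : k₀ ≠ l₀ := fun heq => h ⟨k₀, ⟨hk1, hk2⟩, by rw [heq]; exact ⟨hl1, hl2⟩⟩
      have hz : (inner ℂ (u j) (u j') : ℂ) = 0 := horth k₀ l₀ hne j j' hk1 hk2 hl1 hl2
      rw [hz, mul_zero, mul_zero]
  have hSD : ∑ k, (inner ℂ (w k) (w k) : ℂ)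
      = ∑ i, (inner ℂ (∑ j, ((D i j : ℝ) : ℂ) • u j) (∑ j, ((D i j : ℝ) : ℂ) • u j) : ℂ) := by
    rw [sum_inner_expand S u, sum_inner_expand D u, hSS, hD.eq]
    exact hMD
  have hre : ∀ v : H, (inner ℂ v v : ℂ).re = ‖v‖ ^ 2 := fun v => by
    have h := inner_self_eq_norm_sq (𝕜 := ℂ) v
    simpa using h
  have hnorm : ∑ k, ‖w k‖ ^ 2 = ∑ i, ‖∑ j, ((D i j : ℝ) : ℂ) • u j‖ ^ 2 := by
    have h1 := congrArg Complex.re hSD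
    rw [Complex.re_sum, Complex.re_sum] at h1
    simp_rw [hre] at h1
    exact h1
  -- reconstruction of u from w
  have huw : ∀ j : Fin N, u j = ∑ k, ((T j k : ℝ) : ℂ) • w k := by
    intro j
    simp_rw [hw, Finset.smul_sum, smul_smul]
    rw [Finset.sum_comm]
    have hcoef : ∀ j' : Fin N, (∑ k, ((T j k : ℝ) : ℂ) * ((S k j' : ℝ) : ℂ))
        = (((1 : Matrix (Fin N) (Fin N) ℝ) j j' : ℝ) : ℂ) := by
      intro j'
      rw [← hTS, Matrix.mul_apply]
      push_cast
      rfl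
    simp_rw [← Finset.sum_smul, hcoef]
    rw [Finset.sum_eq_single j]
    · rw [Matrix.one_apply_eq]; simp
    · intro b _ hb
      rw [Matrix.one_apply_ne (Ne.symm hb)]; simp
    · intro habs; exact absurd (Finset.mem_univ j) habs
  have hub : ∀ j : Fin N, ‖u j‖ ^ 2 ≤ (∑ k, (T j k) ^ 2) * ∑ k, ‖w k‖ ^ 2 := by
    intro j
    have h1 : ‖u j‖ ≤ ∑ k, |T j k| * ‖w k‖ := by
      rw [huw j]
      refine (norm_sum_le _ _).trans ?_
      apply Finset.sum_le_sum; intro k _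
      rw [norm_smul, Complex.norm_real, Real.norm_eq_abs]
    calc ‖u j‖ ^ 2 ≤ (∑ k, |T j k| * ‖w k‖) ^ 2 := by
          apply pow_le_pow_left₀ (norm_nonneg _) h1
      _ ≤ (∑ k, |T j k| ^ 2) * ∑ k, ‖w k‖ ^ 2 :=
          Finset.sum_mul_sq_le_sq_mul_sq _ _ _
      _ = (∑ k, (T j k) ^ 2) * ∑ k, ‖w k‖ ^ 2 := by simp [sq_abs]
  have hfinal : ∑ j, ‖u j‖ ^ 2 ≤ (∑ j, ∑ k, (T j k) ^ 2) * ∑ k, ‖w k‖ ^ 2 := by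
    rw [Finset.sum_mul]
    exact Finset.sum_le_sum fun j _ => hub j
  have hrhs_nonneg : (0 : ℝ) ≤ ∑ i, ‖∑ j, (D i j : ℂ) • u j‖ ^ 2 :=
    Finset.sum_nonneg fun i _ => sq_nonneg _
  calc ∑ i, ‖u i‖ ^ 2 ≤ (∑ j, ∑ k, (T j k) ^ 2) * ∑ k, ‖w k‖ ^ 2 := hfinal
    _ = (∑ j, ∑ k, (T j k) ^ 2) * ∑ i, ‖∑ j, (D i j : ℂ) • u j‖ ^ 2 := by rw [hnorm]
    _ ≤ ((∑ j, ∑ k, (T j k) ^ 2) + 1) * ∑ i, ‖∑ j, (D i j : ℂ) • u j‖ ^ 2 := by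
        apply mul_le_mul_of_nonneg_right _ hrhs_nonneg
        linarith [Finset.sum_nonneg (fun j (_ : j ∈ Finset.univ) =>
          Finset.sum_nonneg (fun k (_ : k ∈ Finset.univ) => sq_nonneg (T j k)))]
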